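/- Assume every entry of A lies in [−1, 1], let μ > 0, set P = m + n and C₀ = 2P² + 3μP + P + μ, fix a reference r ∈ Δ_m × Δ_n and let σ* = (x*, y*) be the unique saddle point of f_r. Let 0 < η < 2μ/C₀² and set C₁ = 2ημ − (ηC₀)² > 0. Consider the reward-transformed RM+ dynamics σ^t_i = θ^t_i/‖θ^t_i‖₁, θ^{t+1}_i = max(θ^t_i + η·m_i(σ^t), 0) with nonnegative nonzero initial blocks θ¹ and assume θ^t_i ≠ 0 for all t. Set C₂ = min_{k ≥ 1} ½‖k·σ* − θ¹‖₂² + η·⟨−m(σ*), θ¹⟩. Then for every T ≥ 1, C₁ · Σ_{t=1}^{T} ½‖σ* − σ^t‖₂² ≤ C₂; in particular the series Σ_{t≥1} ‖σ* − σ^t‖₂² converges. -/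

import Mathlib

open Finset

/-- Squared Euclidean norm of a vector in `ℝ^d`. -/
noncomputable def sqnorm {d : ℕ} (v : Fin d → ℝ) : ℝ := ∑ i, (v i) ^ 2

/-- Euclidean norm `‖·‖₂` of a vector in `ℝ^d`. -/
noncomputable def enorm2 {d : ℕ} (v : Fin d → ℝ) : ℝ := Real.sqrt (sqnorm v)

/-- Euclidean inner product on `ℝ^d`. -/
noncomputable def ip {d : ℕ} (u v : Fin d → ℝ) : ℝ := ∑ i, u i * v i

/-- The max-player's payoff `⟨x, A y⟩` in the two-player zero-sum game with payoff matrix `A`. -/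
noncomputable def pay {m n : ℕ} (A : Matrix (Fin m) (Fin n) ℝ)
    (x : Fin m → ℝ) (y : Fin n → ℝ) : ℝ := ip x (A.mulVec y)

/-- The regularized objective `f_r(x,y) = ⟨x, A y⟩ + (μ/2)‖x − r₀‖₂² − (μ/2)‖y − r₁‖₂²`. -/
noncomputable def freg {m n : ℕ} (A : Matrix (Fin m) (Fin n) ℝ) (μ : ℝ)
    (r₀ : Fin m → ℝ) (r₁ : Fin n → ℝ) (x : Fin m → ℝ) (y : Fin n → ℝ) : ℝ :=
  pay A x y + (μ / 2) * sqnorm (x - r₀) - (μ / 2) * sqnorm (y - r₁)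

/-- `(xs, ys)` is a saddle point of `f_r` on `Δ_m × Δ_n`. -/
def IsSaddle {m n : ℕ} (A : Matrix (Fin m) (Fin n) ℝ) (μ : ℝ)
    (r₀ : Fin m → ℝ) (r₁ : Fin n → ℝ) (xs : Fin m → ℝ) (ys : Fin n → ℝ) : Prop :=
  xs ∈ stdSimplex ℝ (Fin m) ∧ ys ∈ stdSimplex ℝ (Fin n) ∧
  ∀ x ∈ stdSimplex ℝ (Fin m), ∀ y ∈ stdSimplex ℝ (Fin n),
    freg A μ r₀ r₁ xs y ≤ freg A μ r₀ r₁ xs ys ∧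
    freg A μ r₀ r₁ xs ys ≤ freg A μ r₀ r₁ x ys

/-- Regularized loss gradient of the min-player at profile `σ = (x, y)`:
`ℓ₀(σ) = A y + μ(x − r₀)`. -/
noncomputable def ell0 {m n : ℕ} (A : Matrix (Fin m) (Fin n) ℝ) (μ : ℝ)
    (r₀ : Fin m → ℝ) (σ : (Fin m → ℝ) × (Fin n → ℝ)) : Fin m → ℝ :=
  A.mulVec σ.2 + μ • (σ.1 - r₀)

/-- Regularized loss gradient of the max-player at profile `σ = (x, y)`:
`ℓ₁(σ) = −Aᵀ x + μ(y − r₁)`. -/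
noncomputable def ell1 {m n : ℕ} (A : Matrix (Fin m) (Fin n) ℝ) (μ : ℝ)
    (r₁ : Fin n → ℝ) (σ : (Fin m → ℝ) × (Fin n → ℝ)) : Fin n → ℝ :=
  -(A.transpose.mulVec σ.1) + μ • (σ.2 - r₁)

/-- `m₀(σ) = ⟨ℓ₀(σ), x⟩·𝟙 − ℓ₀(σ)`. -/
noncomputable def mvec0 {m n : ℕ} (A : Matrix (Fin m) (Fin n) ℝ) (μ : ℝ)
    (r₀ : Fin m → ℝ) (σ : (Fin m → ℝ) × (Fin n → ℝ)) : Fin m → ℝ :=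
  (ip (ell0 A μ r₀ σ) σ.1) • (1 : Fin m → ℝ) - ell0 A μ r₀ σ

/-- `m₁(σ) = ⟨ℓ₁(σ), y⟩·𝟙 − ℓ₁(σ)`. -/
noncomputable def mvec1 {m n : ℕ} (A : Matrix (Fin m) (Fin n) ℝ) (μ : ℝ)
    (r₁ : Fin n → ℝ) (σ : (Fin m → ℝ) × (Fin n → ℝ)) : Fin n → ℝ :=
  (ip (ell1 A μ r₁ σ) σ.2) • (1 : Fin n → ℝ) - ell1 A μ r₁ σ

/-- The strategy profile obtained by `ℓ₁`-normalizing each block of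
the regret vector `θ`: `σ_i = θ_i / ‖θ_i‖₁`. -/
noncomputable def strat {m n : ℕ} (θ : (Fin m → ℝ) × (Fin n → ℝ)) :
    (Fin m → ℝ) × (Fin n → ℝ) :=
  ((∑ i, |θ.1 i|)⁻¹ • θ.1, (∑ j, |θ.2 j|)⁻¹ • θ.2)

/-- The RM+ Lyapunov potential
`Φ(θ) = min_{k ≥ 1} ½‖k·σ* − θ‖₂² + η⟨−m(σ*), θ⟩` (the minimum is attained, so it equals
the infimum used here). -/
noncomputable def Phi {m n : ℕ} (A : Matrix (Fin m) (Fin n) ℝ) (μ : ℝ)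
    (r₀ : Fin m → ℝ) (r₁ : Fin n → ℝ) (η : ℝ)
    (xs : Fin m → ℝ) (ys : Fin n → ℝ) (θ : (Fin m → ℝ) × (Fin n → ℝ)) : ℝ :=
  sInf {v : ℝ | ∃ k : ℝ, 1 ≤ k ∧
      v = (1 / 2) * (sqnorm (k • xs - θ.1) + sqnorm (k • ys - θ.2))} +
    η * (ip (-(mvec0 A μ r₀ (xs, ys))) θ.1 + ip (-(mvec1 A μ r₁ (xs, ys))) θ.2)

lemma sqnorm_nonneg {d : ℕ} (v : Fin d → ℝ) : 0 ≤ sqnorm v :=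
  Finset.sum_nonneg fun i _ => sq_nonneg _

lemma enorm2_nonneg {d : ℕ} (v : Fin d → ℝ) : 0 ≤ enorm2 v := Real.sqrt_nonneg _

lemma sq_enorm2 {d : ℕ} (v : Fin d → ℝ) : enorm2 v ^ 2 = sqnorm v :=
  Real.sq_sqrt (sqnorm_nonneg v)

lemma enorm2_le {d : ℕ} {v : Fin d → ℝ} {c : ℝ} (hc : 0 ≤ c) (h : sqnorm v ≤ c ^ 2) :
    enorm2 v ≤ c := by
  rw [enorm2, show c = Real.sqrt (c ^ 2) from (Real.sqrt_sq hc).symm]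
  exact Real.sqrt_le_sqrt h

lemma sqnorm_le_of_enorm2_le {d : ℕ} {v : Fin d → ℝ} {c : ℝ} (h : enorm2 v ≤ c) :
    sqnorm v ≤ c ^ 2 := by
  rw [← sq_enorm2 v]
  have := enorm2_nonneg v
  nlinarith

lemma abs_ip_le {d : ℕ} (u v : Fin d → ℝ) : |ip u v| ≤ enorm2 u * enorm2 v := by
  have h := sum_mul_sq_le_sq_mul_sq Finset.univ u v
  have h2 : (ip u v) ^ 2 ≤ (enorm2 u * enorm2 v) ^ 2 := by
    rw [mul_pow, sq_enorm2, sq_enorm2]; exact h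
  have h3 := mul_nonneg (enorm2_nonneg u) (enorm2_nonneg v)
  have h4 : |ip u v| ^ 2 ≤ (enorm2 u * enorm2 v) ^ 2 := by rwa [sq_abs]
  nlinarith [abs_nonneg (ip u v)]

lemma enorm2_add_le {d : ℕ} (u v : Fin d → ℝ) :
    enorm2 (fun i => u i + v i) ≤ enorm2 u + enorm2 v := by
  apply enorm2_le (by have := enorm2_nonneg u; have := enorm2_nonneg v; linarith)
  have h := abs_ip_le u v
  have h1 : ip u v ≤ enorm2 u * enorm2 v := (abs_le.1 h).2
  have e : sqnorm (fun i => u i + v i) = sqnorm u + 2 * ip u v + sqnorm v := by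
    simp only [sqnorm, ip, ← Finset.sum_add_distrib, Finset.mul_sum]
    exact Finset.sum_congr rfl fun i _ => by ring
  rw [e]
  nlinarith [sq_enorm2 u, sq_enorm2 v]

lemma coord_ineq (z p g c : ℝ) (hz : 0 ≤ z) (hp : 0 ≤ p) (hc : 0 ≤ c) :
    (1/2)*(z - max (p+g) 0)^2 + c * max (p+g) 0 - ((1/2)*(z-p)^2 + c*p)
      ≤ g*(p - z) + (1/2)*(g+c)^2 := by
  rcases le_or_gt 0 (p+g) with h|h
  · rw [max_eq_left h]; nlinarith
  · rw [max_eq_right h.le]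
    nlinarith [mul_nonneg hz (neg_nonneg.2 h.le), sq_nonneg (c+g+p)]

lemma enorm2_congr {d : ℕ} {u v : Fin d → ℝ} (h : ∀ i, u i = v i) : enorm2 u = enorm2 v := by
  have : u = v := funext h
  rw [this]

lemma simplex_entry_le_one {d : ℕ} {x : Fin d → ℝ} (hx : x ∈ stdSimplex ℝ (Fin d)) (i : Fin d) :
    x i ≤ 1 := by
  have h := Finset.single_le_sum (f := x) (fun j _ => hx.1 j) (Finset.mem_univ i)
  rw [hx.2] at h; exact h

lemma sqnorm_simplex_le_one {d : ℕ} {x : Fin d → ℝ} (hx : x ∈ stdSimplex ℝ (Fin d)) :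
    sqnorm x ≤ 1 := by
  calc sqnorm x = ∑ i, (x i)^2 := rfl
    _ ≤ ∑ i, x i := Finset.sum_le_sum fun i _ => by
        nlinarith [hx.1 i, simplex_entry_le_one hx i]
    _ = 1 := hx.2

lemma enorm2_simplex_le_one {d : ℕ} {x : Fin d → ℝ} (hx : x ∈ stdSimplex ℝ (Fin d)) :
    enorm2 x ≤ 1 := enorm2_le zero_le_one (by simpa using sqnorm_simplex_le_one hx)

lemma enorm2_sub_le {d : ℕ} (u v : Fin d → ℝ) :
    enorm2 (fun i => u i - v i) ≤ enorm2 u + enorm2 v := by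
  have h := enorm2_add_le u (fun i => -(v i))
  have e1 : enorm2 (fun i => u i + -(v i)) = enorm2 (fun i => u i - v i) :=
    enorm2_congr fun i => by ring
  have e2 : enorm2 (fun i => -(v i)) = enorm2 v := by
    unfold enorm2 sqnorm; congr 1; exact Finset.sum_congr rfl fun i _ => by ring
  rw [e1, e2] at h; exact h

lemma enorm2_smul_le {d : ℕ} (c : ℝ) (v : Fin d → ℝ) :
    enorm2 (fun i => c * v i) ≤ |c| * enorm2 v := by
  apply enorm2_le (mul_nonneg (abs_nonneg c) (enorm2_nonneg v))
  have : sqnorm (fun i => c * v i) = c^2 * sqnorm v := by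
    unfold sqnorm; rw [Finset.mul_sum]; exact Finset.sum_congr rfl fun i _ => by ring
  rw [this, mul_pow, sq_enorm2, sq_abs]

lemma enorm2_const_le {d : ℕ} (hd : 1 ≤ d) (s : ℝ) :
    enorm2 (fun _ : Fin d => s) ≤ (d : ℝ) * |s| := by
  apply enorm2_le (by positivity)
  have h : sqnorm (fun _ : Fin d => s) = (d : ℝ) * s^2 := by
    unfold sqnorm
    rw [Finset.sum_const, Finset.card_univ, Fintype.card_fin, nsmul_eq_mul]
  rw [h]
  have hd1 : (1 : ℝ) ≤ (d : ℝ) := by exact_mod_cast hd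
  have h2 : ((d : ℝ) * |s|)^2 = (d:ℝ)^2 * s^2 := by rw [mul_pow, sq_abs]
  rw [h2]
  nlinarith [sq_nonneg s]

lemma ip_mvec_zero {d : ℕ} (ℓ θv : Fin d → ℝ) (hnn : ∀ i, 0 ≤ θv i) (hne : θv ≠ 0) :
    ip ((ip ℓ ((∑ i, |θv i|)⁻¹ • θv)) • (1 : Fin d → ℝ) - ℓ) θv = 0 := by
  have habs : ∀ i, |θv i| = θv i := fun i => abs_of_nonneg (hnn i)
  have hs : ∑ i, |θv i| = ∑ i, θv i := Finset.sum_congr rfl fun i _ => habs i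
  have hpos : 0 < ∑ i, θv i := by
    rcases Function.ne_iff.1 hne with ⟨i, hi⟩
    have : 0 < θv i := lt_of_le_of_ne (hnn i) (Ne.symm hi)
    exact lt_of_lt_of_le this (Finset.single_le_sum (fun j _ => hnn j) (Finset.mem_univ i))
  set s := ∑ i, θv i with hsdef
  have h1 : ip ℓ ((∑ i, |θv i|)⁻¹ • θv) = s⁻¹ * ip ℓ θv := by
    rw [hs]
    unfold ip
    rw [Finset.mul_sum]
    exact Finset.sum_congr rfl fun i _ => by simp [Pi.smul_apply, smul_eq_mul]; ring
  have expand : ∀ i, (((ip ℓ ((∑ j, |θv j|)⁻¹ • θv)) • (1 : Fin d → ℝ) - ℓ) i) * θv i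
      = (s⁻¹ * ip ℓ θv) * θv i - ℓ i * θv i := by
    intro i
    simp only [Pi.sub_apply, Pi.smul_apply, Pi.one_apply, smul_eq_mul, h1]
    ring
  have e2 : ip ((ip ℓ ((∑ i, |θv i|)⁻¹ • θv)) • (1 : Fin d → ℝ) - ℓ) θv
      = (s⁻¹ * ip ℓ θv) * (∑ i, θv i) - ip ℓ θv := by
    calc ip ((ip ℓ ((∑ i, |θv i|)⁻¹ • θv)) • (1 : Fin d → ℝ) - ℓ) θv
        = ∑ i, ((ip ℓ ((∑ j, |θv j|)⁻¹ • θv)) • (1 : Fin d → ℝ) - ℓ) i * θv i := rfl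
      _ = ∑ i, (s⁻¹ * ip ℓ θv * θv i - ℓ i * θv i) := Finset.sum_congr rfl fun i _ => expand i
      _ = (s⁻¹ * ip ℓ θv) * (∑ i, θv i) - ip ℓ θv := by
          rw [Finset.sum_sub_distrib, ← Finset.mul_sum]; rfl
  rw [e2, ← hsdef]
  field_simp
  ring

lemma ip_comm {d : ℕ} (u v : Fin d → ℝ) : ip u v = ip v u :=
  Finset.sum_congr rfl fun i _ => mul_comm _ _

lemma ip_mulVec {m n : ℕ} (A : Matrix (Fin m) (Fin n) ℝ) (u : Fin m → ℝ) (v : Fin n → ℝ) :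
    ip u (A.mulVec v) = ip (A.transpose.mulVec u) v := by
  unfold ip Matrix.mulVec dotProduct
  simp only [Matrix.transpose_apply, Finset.mul_sum, Finset.sum_mul]
  rw [Finset.sum_comm]
  exact Finset.sum_congr rfl fun j _ => Finset.sum_congr rfl fun i _ => by ring

lemma sqnorm_sub_comm {d : ℕ} (u v : Fin d → ℝ) :
    sqnorm (fun i => u i - v i) = sqnorm (fun i => v i - u i) :=
  Finset.sum_congr rfl fun i _ => by ring

lemma enorm2_sub_comm {d : ℕ} (u v : Fin d → ℝ) :
    enorm2 (fun i => u i - v i) = enorm2 (fun i => v i - u i) := by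
  unfold enorm2; rw [sqnorm_sub_comm]

/-- Generic variational-inequality extraction from one-sided optimality of a quadratic. -/
lemma quad_vi {d : ℕ} {μ : ℝ} (hμ : 0 < μ) (w r xs0 x : Fin d → ℝ)
    (hkey : ∀ s : ℝ, 0 < s → s ≤ 1 →
      ip w xs0 + (μ/2) * sqnorm (fun i => xs0 i - r i)
        ≤ ip w (fun i => xs0 i + s * (x i - xs0 i))
          + (μ/2) * sqnorm (fun i => (xs0 i + s * (x i - xs0 i)) - r i)) :
    0 ≤ ip (fun i => w i + μ * (xs0 i - r i)) (fun i => x i - xs0 i) := by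
  set dx : Fin d → ℝ := fun i => x i - xs0 i with hdx
  set I : ℝ := ip (fun i => w i + μ * (xs0 i - r i)) dx with hI
  set q : ℝ := sqnorm dx with hq
  have hq0 : 0 ≤ q := sqnorm_nonneg dx
  have key2 : ∀ s : ℝ, 0 < s → s ≤ 1 → 0 ≤ I + s * (μ/2) * q := by
    intro s hs0 hs1
    have h := hkey s hs0 hs1
    have expand : ip w (fun i => xs0 i + s * (x i - xs0 i))
          + (μ/2) * sqnorm (fun i => (xs0 i + s * (x i - xs0 i)) - r i)
        = ip w xs0 + (μ/2) * sqnorm (fun i => xs0 i - r i) + s * I + s^2 * (μ/2) * q := by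
      unfold I q dx
      unfold ip sqnorm
      simp only [Finset.mul_sum, ← Finset.sum_add_distrib]
      exact Finset.sum_congr rfl fun i _ => by ring
    rw [expand] at h
    have h2 : 0 ≤ s * (I + s * (μ/2) * q) := by nlinarith
    nlinarith
  by_contra hneg
  push_neg at hneg
  have hden : (0:ℝ) < (μ/2) * q + 1 := by nlinarith
  set s : ℝ := min 1 ((-I) / ((μ/2) * q + 1)) with hsdef
  have hs0 : 0 < s := lt_min one_pos (div_pos (by linarith) hden)
  have hs1 : s ≤ 1 := min_le_left _ _
  have h := key2 s hs0 hs1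
  have hsle : s ≤ (-I) / ((μ/2) * q + 1) := min_le_right _ _
  have : s * ((μ/2) * q + 1) ≤ -I := by
    rw [← le_div_iff₀ hden] at *
    exact hsle
  nlinarith

lemma saddle_vi0 {m n : ℕ} {A : Matrix (Fin m) (Fin n) ℝ} {μ : ℝ} (hμ : 0 < μ)
    {r₀ : Fin m → ℝ} {r₁ : Fin n → ℝ} {xs : Fin m → ℝ} {ys : Fin n → ℝ}
    (hs : IsSaddle A μ r₀ r₁ xs ys) {x : Fin m → ℝ} (hx : x ∈ stdSimplex ℝ (Fin m)) :
    0 ≤ ip (ell0 A μ r₀ (xs, ys)) (fun i => x i - xs i) := by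
  have key := quad_vi (d := m) hμ (A.mulVec ys) r₀ xs x ?_
  · have e : ip (ell0 A μ r₀ (xs, ys)) (fun i => x i - xs i)
        = ip (fun i => (A.mulVec ys) i + μ * (xs i - r₀ i)) (fun i => x i - xs i) := by
      unfold ip
      exact Finset.sum_congr rfl fun i _ => by
        simp [ell0, Pi.add_apply, Pi.smul_apply, smul_eq_mul, Pi.sub_apply]
    rw [e]; exact key
  · intro s hs0 hs1
    set xc : Fin m → ℝ := fun i => xs i + s * (x i - xs i) with hxc
    have hmem : xc ∈ stdSimplex ℝ (Fin m) := by
      constructor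
      · intro i
        have h1 := hx.1 i; have h2 := hs.1.1 i
        simp only [hxc]; nlinarith
      · have e : ∑ i, xc i = ∑ i, (xs i + s * (x i - xs i)) := rfl
        rw [e, Finset.sum_add_distrib, ← Finset.mul_sum, Finset.sum_sub_distrib,
          hx.2, hs.1.2]
        ring
    have hfle := (hs.2.2 xc hmem ys hs.2.1).2
    unfold freg pay at hfle
    have e1 : sqnorm (xs - r₀) = sqnorm (fun i => xs i - r₀ i) := rfl
    have e2 : sqnorm (xc - r₀) = sqnorm (fun i => (xs i + s * (x i - xs i)) - r₀ i) := rfl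
    have e3 : ip xs (A.mulVec ys) = ip (A.mulVec ys) xs := ip_comm _ _
    have e4 : ip xc (A.mulVec ys) = ip (A.mulVec ys) (fun i => xs i + s * (x i - xs i)) := by
      rw [ip_comm]
    rw [e1, e2, e3, e4] at hfle
    linarith

lemma saddle_vi1 {m n : ℕ} {A : Matrix (Fin m) (Fin n) ℝ} {μ : ℝ} (hμ : 0 < μ)
    {r₀ : Fin m → ℝ} {r₁ : Fin n → ℝ} {xs : Fin m → ℝ} {ys : Fin n → ℝ}
    (hs : IsSaddle A μ r₀ r₁ xs ys) {y : Fin n → ℝ} (hy : y ∈ stdSimplex ℝ (Fin n)) :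
    0 ≤ ip (ell1 A μ r₁ (xs, ys)) (fun j => y j - ys j) := by
  have key := quad_vi (d := n) hμ (fun j => -(A.transpose.mulVec xs) j) r₁ ys y ?_
  · have e : ip (ell1 A μ r₁ (xs, ys)) (fun j => y j - ys j)
        = ip (fun j => -(A.transpose.mulVec xs) j + μ * (ys j - r₁ j)) (fun j => y j - ys j) := by
      unfold ip
      exact Finset.sum_congr rfl fun j _ => by
        simp [ell1, Pi.add_apply, Pi.smul_apply, smul_eq_mul, Pi.sub_apply, Pi.neg_apply]
    rw [e]; exact key
  · intro s hs0 hs1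
    set yc : Fin n → ℝ := fun j => ys j + s * (y j - ys j) with hyc
    have hmem : yc ∈ stdSimplex ℝ (Fin n) := by
      constructor
      · intro j
        have h1 := hy.1 j; have h2 := hs.2.1.1 j
        simp only [hyc]; nlinarith
      · have e : ∑ j, yc j = ∑ j, (ys j + s * (y j - ys j)) := rfl
        rw [e, Finset.sum_add_distrib, ← Finset.mul_sum, Finset.sum_sub_distrib,
          hy.2, hs.2.1.2]
        ring
    have hfle := (hs.2.2 xs hs.1 yc hmem).1
    unfold freg pay at hfle
    have e1 : sqnorm (ys - r₁) = sqnorm (fun j => ys j - r₁ j) := rfl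
    have e2 : sqnorm (yc - r₁) = sqnorm (fun j => (ys j + s * (y j - ys j)) - r₁ j) := rfl
    have t1 : ip xs (A.mulVec ys) = ip (A.transpose.mulVec xs) ys := ip_mulVec A xs ys
    have t2 : ip xs (A.mulVec yc) = ip (A.transpose.mulVec xs) yc := ip_mulVec A xs yc
    have n1 : ip (fun j => -(A.transpose.mulVec xs) j) ys = - ip (A.transpose.mulVec xs) ys := by
      unfold ip; rw [← Finset.sum_neg_distrib]
      exact Finset.sum_congr rfl fun j _ => by ring
    have n2 : ip (fun j => -(A.transpose.mulVec xs) j) (fun j => ys j + s * (y j - ys j))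
        = - ip (A.transpose.mulVec xs) yc := by
      unfold ip; rw [← Finset.sum_neg_distrib]
      exact Finset.sum_congr rfl fun j _ => by simp only [hyc]; ring
    rw [e1, e2, t1, t2] at hfle
    rw [n1, n2]
    linarith

lemma mvec0_saddle_nonpos {m n : ℕ} {A : Matrix (Fin m) (Fin n) ℝ} {μ : ℝ} (hμ : 0 < μ)
    {r₀ : Fin m → ℝ} {r₁ : Fin n → ℝ} {xs : Fin m → ℝ} {ys : Fin n → ℝ}
    (hs : IsSaddle A μ r₀ r₁ xs ys) (a : Fin m) :
    mvec0 A μ r₀ (xs, ys) a ≤ 0 := by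
  set e : Fin m → ℝ := fun i => if i = a then 1 else 0 with he
  have hmem : e ∈ stdSimplex ℝ (Fin m) := by
    constructor
    · intro i; simp only [he]; split <;> norm_num
    · simp [he]
  have hvi := saddle_vi0 hμ hs hmem
  have expand : ip (ell0 A μ r₀ (xs, ys)) (fun i => e i - xs i)
      = ell0 A μ r₀ (xs, ys) a - ip (ell0 A μ r₀ (xs, ys)) xs := by
    unfold ip
    rw [show ∀ f : Fin m → ℝ, ∑ i, f i * (e i - xs i) = ∑ i, (f i * e i - f i * xs i) from
      fun f => Finset.sum_congr rfl fun i _ => by ring]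
    rw [Finset.sum_sub_distrib]
    congr 1
    simp [he, mul_ite]
  rw [expand] at hvi
  have : mvec0 A μ r₀ (xs, ys) a
      = ip (ell0 A μ r₀ (xs, ys)) xs - ell0 A μ r₀ (xs, ys) a := by
    simp [mvec0, Pi.sub_apply, Pi.smul_apply, Pi.one_apply, smul_eq_mul]
  rw [this]; linarith

lemma mvec1_saddle_nonpos {m n : ℕ} {A : Matrix (Fin m) (Fin n) ℝ} {μ : ℝ} (hμ : 0 < μ)
    {r₀ : Fin m → ℝ} {r₁ : Fin n → ℝ} {xs : Fin m → ℝ} {ys : Fin n → ℝ}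
    (hs : IsSaddle A μ r₀ r₁ xs ys) (b : Fin n) :
    mvec1 A μ r₁ (xs, ys) b ≤ 0 := by
  set e : Fin n → ℝ := fun j => if j = b then 1 else 0 with he
  have hmem : e ∈ stdSimplex ℝ (Fin n) := by
    constructor
    · intro j; simp only [he]; split <;> norm_num
    · simp [he]
  have hvi := saddle_vi1 hμ hs hmem
  have expand : ip (ell1 A μ r₁ (xs, ys)) (fun j => e j - ys j)
      = ell1 A μ r₁ (xs, ys) b - ip (ell1 A μ r₁ (xs, ys)) ys := by
    unfold ip
    rw [show ∀ f : Fin n → ℝ, ∑ j, f j * (e j - ys j) = ∑ j, (f j * e j - f j * ys j) from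
      fun f => Finset.sum_congr rfl fun j _ => by ring]
    rw [Finset.sum_sub_distrib]
    congr 1
    simp [he, mul_ite]
  rw [expand] at hvi
  have : mvec1 A μ r₁ (xs, ys) b
      = ip (ell1 A μ r₁ (xs, ys)) ys - ell1 A μ r₁ (xs, ys) b := by
    simp [mvec1, Pi.sub_apply, Pi.smul_apply, Pi.one_apply, smul_eq_mul]
  rw [this]; linarith

/-- `⟨m(σ), σ*⟩ ≥ μ‖σ − σ*‖²` for any feasible `σ`. -/
lemma mono_vi {m n : ℕ} {A : Matrix (Fin m) (Fin n) ℝ} {μ : ℝ} (hμ : 0 < μ)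
    {r₀ : Fin m → ℝ} {r₁ : Fin n → ℝ} {xs : Fin m → ℝ} {ys : Fin n → ℝ}
    (hs : IsSaddle A μ r₀ r₁ xs ys) {x : Fin m → ℝ} {y : Fin n → ℝ}
    (hx : x ∈ stdSimplex ℝ (Fin m)) (hy : y ∈ stdSimplex ℝ (Fin n)) :
    μ * (sqnorm (fun i => x i - xs i) + sqnorm (fun j => y j - ys j))
      ≤ ip (mvec0 A μ r₀ (x, y)) xs + ip (mvec1 A μ r₁ (x, y)) ys := by
  set ℓ0 := ell0 A μ r₀ (x, y) with hℓ0
  set ℓ1 := ell1 A μ r₁ (x, y) with hℓ1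
  set dx : Fin m → ℝ := fun i => x i - xs i with hdx
  set dy : Fin n → ℝ := fun j => y j - ys j with hdy
  -- ip (mvec0) xs = ip ℓ0 x − ip ℓ0 xs = ip ℓ0 dx
  have h0 : ip (mvec0 A μ r₀ (x, y)) xs = ip ℓ0 dx := by
    have e1 : ip (mvec0 A μ r₀ (x, y)) xs
        = (ip ℓ0 x) * (∑ i, xs i) - ip ℓ0 xs := by
      unfold ip mvec0
      rw [Finset.mul_sum, ← Finset.sum_sub_distrib]
      exact Finset.sum_congr rfl fun i _ => by
        simp only [Pi.sub_apply, Pi.smul_apply, Pi.one_apply, smul_eq_mul, ← hℓ0]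
        unfold ip
        ring
    rw [e1, hs.1.2, mul_one]
    unfold ip
    rw [← Finset.sum_sub_distrib]
    exact Finset.sum_congr rfl fun i _ => by simp only [hdx]; ring
  have h1 : ip (mvec1 A μ r₁ (x, y)) ys = ip ℓ1 dy := by
    have e1 : ip (mvec1 A μ r₁ (x, y)) ys
        = (ip ℓ1 y) * (∑ j, ys j) - ip ℓ1 ys := by
      unfold ip mvec1
      rw [Finset.mul_sum, ← Finset.sum_sub_distrib]
      exact Finset.sum_congr rfl fun j _ => by
        simp only [Pi.sub_apply, Pi.smul_apply, Pi.one_apply, smul_eq_mul, ← hℓ1]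
        unfold ip
        ring
    rw [e1, hs.2.1.2, mul_one]
    unfold ip
    rw [← Finset.sum_sub_distrib]
    exact Finset.sum_congr rfl fun j _ => by simp only [hdy]; ring
  -- decompose ℓ(σ) = ℓ(σ*) + difference
  have key : ip ℓ0 dx + ip ℓ1 dy
      = ip (ell0 A μ r₀ (xs, ys)) dx + ip (ell1 A μ r₁ (xs, ys)) dy
        + (ip (A.mulVec dy) dx - ip (A.transpose.mulVec dx) dy)
        + μ * (sqnorm dx + sqnorm dy) := by
    have b0 : ip ℓ0 dx = ip (ell0 A μ r₀ (xs, ys)) dx + ip (A.mulVec dy) dx + μ * sqnorm dx := by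
      unfold ip sqnorm Matrix.mulVec dotProduct
      simp only [Finset.mul_sum, ← Finset.sum_add_distrib]
      refine Finset.sum_congr rfl fun i _ => ?_
      simp only [hℓ0, ell0, Pi.add_apply, Pi.smul_apply, Pi.sub_apply, smul_eq_mul,
        Matrix.mulVec, dotProduct, hdx, hdy]
      rw [show ∑ j, A i j * (y j - ys j) = ∑ j, A i j * y j - ∑ j, A i j * ys j by
        rw [← Finset.sum_sub_distrib]; exact Finset.sum_congr rfl fun j _ => by ring]
      ring
    have b1 : ip ℓ1 dy = ip (ell1 A μ r₁ (xs, ys)) dy - ip (A.transpose.mulVec dx) dy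
        + μ * sqnorm dy := by
      unfold ip sqnorm Matrix.mulVec dotProduct
      simp only [Finset.mul_sum, ← Finset.sum_add_distrib, ← Finset.sum_sub_distrib]
      refine Finset.sum_congr rfl fun j _ => ?_
      simp only [hℓ1, ell1, Pi.add_apply, Pi.smul_apply, Pi.sub_apply, Pi.neg_apply,
        smul_eq_mul, Matrix.mulVec, dotProduct, Matrix.transpose_apply, hdx, hdy]
      rw [show ∑ i, A i j * (x i - xs i) = ∑ i, A i j * x i - ∑ i, A i j * xs i by
        rw [← Finset.sum_sub_distrib]; exact Finset.sum_congr rfl fun i _ => by ring]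
      ring
    rw [b0, b1]; ring
  have cross : ip (A.mulVec dy) dx - ip (A.transpose.mulVec dx) dy = 0 := by
    rw [ip_comm (A.mulVec dy) dx, ip_mulVec A dx dy]
    ring
  have hvi0 := saddle_vi0 hμ hs hx
  have hvi1 := saddle_vi1 hμ hs hy
  rw [h0, h1, key, cross]
  have : ip (ell0 A μ r₀ (xs, ys)) dx = ip (ell0 A μ r₀ (xs, ys)) (fun i => x i - xs i) := rfl
  linarith [hvi0, hvi1]

lemma sqnorm_mulVec_le {m n : ℕ} {A : Matrix (Fin m) (Fin n) ℝ}
    (hA : ∀ i j, A i j ∈ Set.Icc (-1 : ℝ) 1) (w : Fin n → ℝ) :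
    sqnorm (A.mulVec w) ≤ (m : ℝ) * (n : ℝ) * sqnorm w := by
  have hrow : ∀ i : Fin m, ((A.mulVec w) i) ^ 2 ≤ (n : ℝ) * sqnorm w := by
    intro i
    have hcs := sum_mul_sq_le_sq_mul_sq Finset.univ (fun j => A i j) w
    have h1 : (A.mulVec w) i = ∑ j, A i j * w j := rfl
    have h2 : ∑ j, (A i j) ^ 2 ≤ (n : ℝ) := by
      calc ∑ j, (A i j) ^ 2 ≤ ∑ _j : Fin n, (1 : ℝ) := by
            refine Finset.sum_le_sum fun j _ => ?_
            have := hA i j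
            nlinarith [this.1, this.2]
        _ = (n : ℝ) := by simp
    rw [h1]
    calc (∑ j, A i j * w j) ^ 2 ≤ (∑ j, (A i j) ^ 2) * ∑ j, (w j) ^ 2 := hcs
      _ ≤ (n : ℝ) * sqnorm w := by
          have := sqnorm_nonneg w
          have h3 : ∑ j, (w j)^2 = sqnorm w := rfl
          rw [h3]
          exact mul_le_mul_of_nonneg_right h2 this
  calc sqnorm (A.mulVec w) = ∑ i, ((A.mulVec w) i)^2 := rfl
    _ ≤ ∑ _i : Fin m, (n : ℝ) * sqnorm w := Finset.sum_le_sum fun i _ => hrow i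
    _ = (m : ℝ) * ((n : ℝ) * sqnorm w) := by simp [mul_comm]
    _ = (m : ℝ) * (n : ℝ) * sqnorm w := by ring

lemma enorm2_mulVec_simplex_le {m n : ℕ} {A : Matrix (Fin m) (Fin n) ℝ}
    (hA : ∀ i j, A i j ∈ Set.Icc (-1 : ℝ) 1) {w : Fin n → ℝ}
    (hw : w ∈ stdSimplex ℝ (Fin n)) (hm : 1 ≤ m) :
    enorm2 (A.mulVec w) ≤ (m : ℝ) := by
  have hm1 : (1:ℝ) ≤ (m:ℝ) := by exact_mod_cast hm
  apply enorm2_le (by linarith)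
  have hrow : ∀ i : Fin m, ((A.mulVec w) i) ^ 2 ≤ 1 := by
    intro i
    have h1 : (A.mulVec w) i = ∑ j, A i j * w j := rfl
    have habs : |∑ j, A i j * w j| ≤ 1 := by
      calc |∑ j, A i j * w j| ≤ ∑ j, |A i j * w j| := Finset.abs_sum_le_sum_abs _ _
        _ ≤ ∑ j, w j := by
            refine Finset.sum_le_sum fun j _ => ?_
            rw [abs_mul]
            have h2 := hA i j
            have h3 : |A i j| ≤ 1 := abs_le.2 ⟨h2.1, h2.2⟩
            have h4 : |w j| = w j := abs_of_nonneg (hw.1 j)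
            calc |A i j| * |w j| ≤ 1 * |w j| :=
                mul_le_mul_of_nonneg_right h3 (abs_nonneg _)
              _ = w j := by rw [one_mul, h4]
        _ = 1 := hw.2
    rw [h1]
    nlinarith [abs_nonneg (∑ j, A i j * w j), sq_abs (∑ j, A i j * w j)]
  calc sqnorm (A.mulVec w) = ∑ i, ((A.mulVec w) i)^2 := rfl
    _ ≤ ∑ _i : Fin m, (1:ℝ) := Finset.sum_le_sum fun i _ => hrow i
    _ = (m : ℝ) := by simp
    _ ≤ (m : ℝ)^2 := by nlinarith

/-- Generic single-block Lipschitz estimate for the regret operator. -/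
lemma mvec_block_lip {d : ℕ} (hd : 1 ≤ d) (ℓ ℓ' p p' : Fin d → ℝ) {E B δ : ℝ}
    (hE : enorm2 (fun a => ℓ a - ℓ' a) ≤ E) (hB : enorm2 ℓ' ≤ B)
    (hp1 : enorm2 p ≤ 1) (hδ : enorm2 (fun i => p i - p' i) ≤ δ) :
    enorm2 (fun a => (ip ℓ p - ℓ a) - (ip ℓ' p' - ℓ' a))
      ≤ (d : ℝ) * (E + B * δ) + E := by
  have hE0 : 0 ≤ E := le_trans (enorm2_nonneg _) hE
  have hB0 : 0 ≤ B := le_trans (enorm2_nonneg _) hB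
  have hδ0 : 0 ≤ δ := le_trans (enorm2_nonneg _) hδ
  have hdiff : ip ℓ p - ip ℓ' p'
      = ip (fun a => ℓ a - ℓ' a) p + ip ℓ' (fun i => p i - p' i) := by
    unfold ip
    rw [← Finset.sum_add_distrib, ← Finset.sum_sub_distrib]
    exact Finset.sum_congr rfl fun i _ => by ring
  have habs : |ip ℓ p - ip ℓ' p'| ≤ E + B * δ := by
    rw [hdiff]
    calc |ip (fun a => ℓ a - ℓ' a) p + ip ℓ' (fun i => p i - p' i)|
        ≤ |ip (fun a => ℓ a - ℓ' a) p| + |ip ℓ' (fun i => p i - p' i)| := abs_add_le _ _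
      _ ≤ enorm2 (fun a => ℓ a - ℓ' a) * enorm2 p
          + enorm2 ℓ' * enorm2 (fun i => p i - p' i) := by
          have := abs_ip_le (fun a => ℓ a - ℓ' a) p
          have := abs_ip_le ℓ' (fun i => p i - p' i)
          linarith
      _ ≤ E * 1 + B * δ := by
          have h1 := enorm2_nonneg (fun a => ℓ a - ℓ' a)
          have h2 := enorm2_nonneg p
          have h3 := enorm2_nonneg ℓ'
          have h4 := enorm2_nonneg (fun i => p i - p' i)
          have := mul_le_mul hE hp1 h2 hE0
          have := mul_le_mul hB hδ h4 hB0
          linarith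
      _ = E + B * δ := by ring
  have tri : enorm2 (fun a => (ip ℓ p - ℓ a) - (ip ℓ' p' - ℓ' a))
      ≤ enorm2 (fun _ : Fin d => ip ℓ p - ip ℓ' p') + enorm2 (fun a => ℓ' a - ℓ a) := by
    have h := enorm2_add_le (fun _ : Fin d => ip ℓ p - ip ℓ' p') (fun a => ℓ' a - ℓ a)
    have e : enorm2 (fun a => (ip ℓ p - ip ℓ' p') + (ℓ' a - ℓ a))
        = enorm2 (fun a => (ip ℓ p - ℓ a) - (ip ℓ' p' - ℓ' a)) :=
      enorm2_congr fun a => by ring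
    rw [e] at h
    exact h
  have hconst := enorm2_const_le hd (ip ℓ p - ip ℓ' p')
  have hswap : enorm2 (fun a => ℓ' a - ℓ a) ≤ E := by
    rw [enorm2_sub_comm]; exact hE
  have hd0 : (0:ℝ) ≤ (d:ℝ) := Nat.cast_nonneg d
  calc enorm2 (fun a => (ip ℓ p - ℓ a) - (ip ℓ' p' - ℓ' a))
      ≤ enorm2 (fun _ : Fin d => ip ℓ p - ip ℓ' p') + enorm2 (fun a => ℓ' a - ℓ a) := tri
    _ ≤ (d : ℝ) * |ip ℓ p - ip ℓ' p'| + E := by linarith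
    _ ≤ (d : ℝ) * (E + B * δ) + E := by
        have := mul_le_mul_of_nonneg_left habs hd0
        linarith

lemma enorm2_neg {d : ℕ} (v : Fin d → ℝ) : enorm2 (fun i => -(v i)) = enorm2 v := by
  unfold enorm2 sqnorm
  congr 1
  exact Finset.sum_congr rfl fun i _ => by ring

lemma arith_block (M P μ δ₀ δ₁ : ℝ) (h1 : 1 ≤ M) (h2 : M ≤ P - 1) (hμ : 0 ≤ μ)
    (hd0 : 0 ≤ δ₀) (hd1 : 0 ≤ δ₁) (hP : 2 ≤ P) :
    M*((P*δ₁ + μ*δ₀) + (M + 2*μ)*δ₀) + (P*δ₁ + μ*δ₀) ≤ P^2*δ₁ + (P^2 + 3*μ*P)*δ₀ := by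
  nlinarith [mul_nonneg (mul_nonneg (sub_nonneg.2 h2) (by linarith : (0:ℝ) ≤ P)) hd1,
    mul_nonneg (mul_nonneg (sub_nonneg.2 h2) hμ) hd0,
    mul_nonneg (mul_nonneg (sub_nonneg.2 h2) (by linarith : (0:ℝ) ≤ P - 1 + M)) hd0,
    mul_nonneg hμ hd0, mul_nonneg (by linarith : (0:ℝ) ≤ P) hd0, hd0, hd1]

lemma arith_comb (P μ δ₀ δ₁ s0 s1 : ℝ) (hP : 2 ≤ P) (hμ : 0 ≤ μ) (hd0 : 0 ≤ δ₀) (hd1 : 0 ≤ δ₁)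
    (hs0 : s0 ≤ (P^2*δ₁ + (P^2 + 3*μ*P)*δ₀)^2) (hs1 : s1 ≤ (P^2*δ₀ + (P^2 + 3*μ*P)*δ₁)^2) :
    s0 + s1 ≤ (2*P^2 + 3*μ*P + P + μ)^2 * (δ₀^2 + δ₁^2) := by
  have hQ : (0:ℝ) ≤ P^2 + 3*μ*P := by nlinarith
  have hPP : (0:ℝ) ≤ P^2 := sq_nonneg P
  have key : (P^2*δ₁ + (P^2 + 3*μ*P)*δ₀)^2 + (P^2*δ₀ + (P^2 + 3*μ*P)*δ₁)^2
      ≤ (P^2 + (P^2 + 3*μ*P))^2 * (δ₀^2 + δ₁^2) := by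
    nlinarith [mul_nonneg (mul_nonneg hPP hQ) (sq_nonneg (δ₀ - δ₁))]
  have hC : P^2 + (P^2 + 3*μ*P) ≤ 2*P^2 + 3*μ*P + P + μ := by nlinarith
  have h2 : (P^2 + (P^2 + 3*μ*P))^2 * (δ₀^2 + δ₁^2)
      ≤ (2*P^2 + 3*μ*P + P + μ)^2 * (δ₀^2 + δ₁^2) := by
    have hnn : (0:ℝ) ≤ δ₀^2 + δ₁^2 := by positivity
    have := mul_le_mul_of_nonneg_right
      (mul_self_le_mul_self (by nlinarith) hC) hnn
    nlinarith [this]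
  linarith

lemma mvec_lipschitz {m n : ℕ} (hm : 1 ≤ m) (hn : 1 ≤ n)
    {A : Matrix (Fin m) (Fin n) ℝ} (hA : ∀ i j, A i j ∈ Set.Icc (-1 : ℝ) 1)
    {μ : ℝ} (hμ : 0 < μ) {P : ℝ} (hP : P = ((m : ℝ) + (n : ℝ)))
    {r₀ : Fin m → ℝ} {r₁ : Fin n → ℝ}
    (hr₀ : r₀ ∈ stdSimplex ℝ (Fin m)) (hr₁ : r₁ ∈ stdSimplex ℝ (Fin n))
    {x xs : Fin m → ℝ} {y ys : Fin n → ℝ}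
    (hx : x ∈ stdSimplex ℝ (Fin m)) (hy : y ∈ stdSimplex ℝ (Fin n))
    (hxs : xs ∈ stdSimplex ℝ (Fin m)) (hys : ys ∈ stdSimplex ℝ (Fin n)) :
    sqnorm (fun a => mvec0 A μ r₀ (x, y) a - mvec0 A μ r₀ (xs, ys) a)
      + sqnorm (fun b => mvec1 A μ r₁ (x, y) b - mvec1 A μ r₁ (xs, ys) b)
      ≤ (2*P^2 + 3*μ*P + P + μ)^2
        * (sqnorm (fun i => x i - xs i) + sqnorm (fun j => y j - ys j)) := by
  have hm1 : (1:ℝ) ≤ (m:ℝ) := by exact_mod_cast hm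
  have hn1 : (1:ℝ) ≤ (n:ℝ) := by exact_mod_cast hn
  have hP2 : (2:ℝ) ≤ P := by rw [hP]; linarith
  have hP0 : (0:ℝ) ≤ P := by linarith
  have hmP : (m:ℝ) ≤ P - 1 := by rw [hP]; linarith
  have hnP : (n:ℝ) ≤ P - 1 := by rw [hP]; linarith
  set dx : Fin m → ℝ := fun i => x i - xs i with hdx
  set dy : Fin n → ℝ := fun j => y j - ys j with hdy
  set δ₀ : ℝ := enorm2 dx with hδ₀def
  set δ₁ : ℝ := enorm2 dy with hδ₁def
  have hδ₀ : 0 ≤ δ₀ := enorm2_nonneg dx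
  have hδ₁ : 0 ≤ δ₁ := enorm2_nonneg dy
  -- ℓ-difference bounds
  have hE0 : enorm2 (fun a => ell0 A μ r₀ (x, y) a - ell0 A μ r₀ (xs, ys) a)
      ≤ P * δ₁ + μ * δ₀ := by
    have epoint : ∀ a, ell0 A μ r₀ (x, y) a - ell0 A μ r₀ (xs, ys) a
        = (A.mulVec dy) a + μ * dx a := by
      intro a
      simp only [ell0, Pi.add_apply, Pi.smul_apply, Pi.sub_apply, smul_eq_mul]
      have : (A.mulVec dy) a = (A.mulVec y) a - (A.mulVec ys) a := by
        unfold Matrix.mulVec dotProduct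
        rw [← Finset.sum_sub_distrib]
        exact Finset.sum_congr rfl fun j _ => by simp only [hdy]; ring
      rw [this]; ring
    rw [enorm2_congr epoint]
    have tri := enorm2_add_le (A.mulVec dy) (fun a => μ * dx a)
    have h1 : enorm2 (A.mulVec dy) ≤ P * δ₁ := by
      apply enorm2_le (by positivity)
      have := sqnorm_mulVec_le hA dy
      have hsq : sqnorm dy = δ₁^2 := (sq_enorm2 dy).symm
      rw [hsq] at this
      have hmn : (m:ℝ) * (n:ℝ) ≤ P^2 := by nlinarith
      nlinarith [sq_nonneg δ₁]
    have h2 : enorm2 (fun a => μ * dx a) ≤ μ * δ₀ := by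
      have := enorm2_smul_le μ dx
      rwa [abs_of_pos hμ] at this
    linarith
  have hE1 : enorm2 (fun b => ell1 A μ r₁ (x, y) b - ell1 A μ r₁ (xs, ys) b)
      ≤ P * δ₀ + μ * δ₁ := by
    have epoint : ∀ b, ell1 A μ r₁ (x, y) b - ell1 A μ r₁ (xs, ys) b
        = -((A.transpose.mulVec dx) b) + μ * dy b := by
      intro b
      simp only [ell1, Pi.add_apply, Pi.smul_apply, Pi.sub_apply, Pi.neg_apply, smul_eq_mul]
      have : (A.transpose.mulVec dx) b
          = (A.transpose.mulVec x) b - (A.transpose.mulVec xs) b := by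
        unfold Matrix.mulVec dotProduct
        rw [← Finset.sum_sub_distrib]
        exact Finset.sum_congr rfl fun i _ => by simp only [hdx]; ring
      rw [this]; ring
    rw [enorm2_congr epoint]
    have tri := enorm2_add_le (fun b => -((A.transpose.mulVec dx) b)) (fun b => μ * dy b)
    have h1 : enorm2 (fun b => -((A.transpose.mulVec dx) b)) ≤ P * δ₀ := by
      rw [enorm2_neg]
      apply enorm2_le (by positivity)
      have hAT : ∀ j i, A.transpose j i ∈ Set.Icc (-1 : ℝ) 1 := fun j i => hA i j
      have := sqnorm_mulVec_le hAT dx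
      have hsq : sqnorm dx = δ₀^2 := (sq_enorm2 dx).symm
      rw [hsq] at this
      have hmn : (n:ℝ) * (m:ℝ) ≤ P^2 := by nlinarith
      nlinarith [sq_nonneg δ₀]
    have h2 : enorm2 (fun b => μ * dy b) ≤ μ * δ₁ := by
      have := enorm2_smul_le μ dy
      rwa [abs_of_pos hμ] at this
    linarith
  -- bounds on ℓ at the saddle
  have hB0 : enorm2 (ell0 A μ r₀ (xs, ys)) ≤ (m:ℝ) + 2*μ := by
    have epoint : ∀ a, ell0 A μ r₀ (xs, ys) a = (A.mulVec ys) a + μ * (xs a - r₀ a) := by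
      intro a; simp [ell0, Pi.add_apply, Pi.smul_apply, Pi.sub_apply, smul_eq_mul]
    have h := enorm2_add_le (A.mulVec ys) (fun a => μ * (xs a - r₀ a))
    have e : enorm2 (fun a => (A.mulVec ys) a + μ * (xs a - r₀ a)) = enorm2 (ell0 A μ r₀ (xs, ys)) :=
      enorm2_congr fun a => (epoint a).symm
    rw [e] at h
    have h1 := enorm2_mulVec_simplex_le hA hys hm
    have h2 : enorm2 (fun a => μ * (xs a - r₀ a)) ≤ μ * 2 := by
      have hs := enorm2_smul_le μ (fun a => xs a - r₀ a)
      have hsub : enorm2 (fun a => xs a - r₀ a) ≤ 2 := by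
        have := enorm2_sub_le xs r₀
        have := enorm2_simplex_le_one hxs
        have := enorm2_simplex_le_one hr₀
        linarith
      rw [abs_of_pos hμ] at hs
      have := enorm2_nonneg (fun a => xs a - r₀ a)
      nlinarith
    linarith
  have hB1 : enorm2 (ell1 A μ r₁ (xs, ys)) ≤ (n:ℝ) + 2*μ := by
    have hAT : ∀ j i, A.transpose j i ∈ Set.Icc (-1 : ℝ) 1 := fun j i => hA i j
    have epoint : ∀ b, ell1 A μ r₁ (xs, ys) b
        = -((A.transpose.mulVec xs) b) + μ * (ys b - r₁ b) := by
      intro b; simp [ell1, Pi.add_apply, Pi.smul_apply, Pi.sub_apply, Pi.neg_apply, smul_eq_mul]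
    have h := enorm2_add_le (fun b => -((A.transpose.mulVec xs) b)) (fun b => μ * (ys b - r₁ b))
    have e : enorm2 (fun b => -((A.transpose.mulVec xs) b) + μ * (ys b - r₁ b))
        = enorm2 (ell1 A μ r₁ (xs, ys)) := enorm2_congr fun b => (epoint b).symm
    rw [e, enorm2_neg] at h
    have h1 := enorm2_mulVec_simplex_le hAT hxs hn
    have h2 : enorm2 (fun b => μ * (ys b - r₁ b)) ≤ μ * 2 := by
      have hs := enorm2_smul_le μ (fun b => ys b - r₁ b)
      have hsub : enorm2 (fun b => ys b - r₁ b) ≤ 2 := by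
        have := enorm2_sub_le ys r₁
        have := enorm2_simplex_le_one hys
        have := enorm2_simplex_le_one hr₁
        linarith
      rw [abs_of_pos hμ] at hs
      have := enorm2_nonneg (fun b => ys b - r₁ b)
      nlinarith
    linarith
  -- block bounds
  have hblock0 : enorm2 (fun a => mvec0 A μ r₀ (x, y) a - mvec0 A μ r₀ (xs, ys) a)
      ≤ (m:ℝ) * ((P * δ₁ + μ * δ₀) + ((m:ℝ) + 2*μ) * δ₀) + (P * δ₁ + μ * δ₀) := by
    have hb := mvec_block_lip hm (ell0 A μ r₀ (x, y)) (ell0 A μ r₀ (xs, ys)) x xs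
      hE0 hB0 (enorm2_simplex_le_one hx) (le_refl δ₀)
    have e : enorm2 (fun a => (ip (ell0 A μ r₀ (x, y)) x - ell0 A μ r₀ (x, y) a)
          - (ip (ell0 A μ r₀ (xs, ys)) xs - ell0 A μ r₀ (xs, ys) a))
        = enorm2 (fun a => mvec0 A μ r₀ (x, y) a - mvec0 A μ r₀ (xs, ys) a) :=
      enorm2_congr fun a => by
        simp [mvec0, Pi.sub_apply, Pi.smul_apply, Pi.one_apply, smul_eq_mul]
    rw [e] at hb
    exact hb
  have hblock1 : enorm2 (fun b => mvec1 A μ r₁ (x, y) b - mvec1 A μ r₁ (xs, ys) b)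
      ≤ (n:ℝ) * ((P * δ₀ + μ * δ₁) + ((n:ℝ) + 2*μ) * δ₁) + (P * δ₀ + μ * δ₁) := by
    have hb := mvec_block_lip hn (ell1 A μ r₁ (x, y)) (ell1 A μ r₁ (xs, ys)) y ys
      hE1 hB1 (enorm2_simplex_le_one hy) (le_refl δ₁)
    have e : enorm2 (fun b => (ip (ell1 A μ r₁ (x, y)) y - ell1 A μ r₁ (x, y) b)
          - (ip (ell1 A μ r₁ (xs, ys)) ys - ell1 A μ r₁ (xs, ys) b))
        = enorm2 (fun b => mvec1 A μ r₁ (x, y) b - mvec1 A μ r₁ (xs, ys) b) :=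
      enorm2_congr fun b => by
        simp [mvec1, Pi.sub_apply, Pi.smul_apply, Pi.one_apply, smul_eq_mul]
    rw [e] at hb
    exact hb
  -- simplify the block bounds
  have hU0 : enorm2 (fun a => mvec0 A μ r₀ (x, y) a - mvec0 A μ r₀ (xs, ys) a)
      ≤ P^2 * δ₁ + (P^2 + 3*μ*P) * δ₀ := by
    exact le_trans hblock0 (arith_block (m:ℝ) P μ δ₀ δ₁ hm1 hmP hμ.le hδ₀ hδ₁ hP2)
  have hU1 : enorm2 (fun b => mvec1 A μ r₁ (x, y) b - mvec1 A μ r₁ (xs, ys) b)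
      ≤ P^2 * δ₀ + (P^2 + 3*μ*P) * δ₁ := by
    exact le_trans hblock1 (arith_block (n:ℝ) P μ δ₁ δ₀ hn1 hnP hμ.le hδ₁ hδ₀ hP2)
  have hs0 := sqnorm_le_of_enorm2_le hU0
  have hs1 := sqnorm_le_of_enorm2_le hU1
  have hsqx : sqnorm (fun i => x i - xs i) = δ₀^2 := (sq_enorm2 dx).symm
  have hsqy : sqnorm (fun j => y j - ys j) = δ₁^2 := (sq_enorm2 dy).symm
  rw [hsqx, hsqy]
  exact arith_comb P μ δ₀ δ₁ _ _ hP2 hμ.le hδ₀ hδ₁ hs0 hs1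

lemma normalize_mem {d : ℕ} (v : Fin d → ℝ) (hnn : ∀ i, 0 ≤ v i) (hne : v ≠ 0) :
    (∑ i, |v i|)⁻¹ • v ∈ stdSimplex ℝ (Fin d) := by
  have habs : ∀ i, |v i| = v i := fun i => abs_of_nonneg (hnn i)
  have hs : ∑ i, |v i| = ∑ i, v i := Finset.sum_congr rfl fun i _ => habs i
  have hpos : 0 < ∑ i, v i := by
    rcases Function.ne_iff.1 hne with ⟨i, hi⟩
    have : 0 < v i := lt_of_le_of_ne (hnn i) (Ne.symm hi)
    exact lt_of_lt_of_le this (Finset.single_le_sum (fun j _ => hnn j) (Finset.mem_univ i))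
  constructor
  · intro i
    have : ((∑ j, |v j|)⁻¹ • v) i = (∑ j, |v j|)⁻¹ * v i := rfl
    rw [this, hs]
    exact mul_nonneg (inv_nonneg.2 hpos.le) (hnn i)
  · have : ∑ i, ((∑ j, |v j|)⁻¹ • v) i = (∑ j, |v j|)⁻¹ * ∑ i, v i := by
      rw [Finset.mul_sum]; rfl
    rw [this, hs]
    field_simp

set_option maxHeartbeats 1000000 in
/-- along the reward-transformed RM+ dynamics with step size
`0 < η < 2μ/C₀²` and `C₁ = 2ημ − (ηC₀)² > 0`, the partial sums satisfy
`C₁ Σ_{t=1}^T ½‖σ* − σ^t‖₂² ≤ C₂` for every `T ≥ 1`, where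
`C₂ = min_{k ≥ 1} ½‖k·σ* − θ¹‖₂² + η⟨−m(σ*), θ¹⟩`; in particular
`Σ_{t ≥ 1} ‖σ* − σ^t‖₂²` converges. -/
theorem rtrmplus_summable_distance_to_saddle
    (m n : ℕ) (hm : 1 ≤ m) (hn : 1 ≤ n) (A : Matrix (Fin m) (Fin n) ℝ)
    (hA : ∀ i j, A i j ∈ Set.Icc (-1 : ℝ) 1)
    (μ : ℝ) (hμ : 0 < μ)
    (P C₀ : ℝ) (hP : P = ((m : ℝ) + (n : ℝ)))
    (hC₀ : C₀ = 2 * P ^ 2 + 3 * μ * P + P + μ)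
    (r₀ : Fin m → ℝ) (r₁ : Fin n → ℝ)
    (hr₀ : r₀ ∈ stdSimplex ℝ (Fin m)) (hr₁ : r₁ ∈ stdSimplex ℝ (Fin n))
    (xs : Fin m → ℝ) (ys : Fin n → ℝ) (hsaddle : IsSaddle A μ r₀ r₁ xs ys)
    (η : ℝ) (hη : 0 < η) (hηlt : η < 2 * μ / C₀ ^ 2)
    (C₁ : ℝ) (hC₁ : C₁ = 2 * η * μ - (η * C₀) ^ 2) (hC₁pos : 0 < C₁)
    (θ : ℕ → (Fin m → ℝ) × (Fin n → ℝ))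
    (hinit_nonneg : (∀ a, 0 ≤ (θ 0).1 a) ∧ (∀ b, 0 ≤ (θ 0).2 b))
    (hinit_ne : (θ 0).1 ≠ 0 ∧ (θ 0).2 ≠ 0)
    (hrec : ∀ t, θ (t + 1) =
      (fun a => max ((θ t).1 a + η * mvec0 A μ r₀ (strat (θ t)) a) 0,
       fun b => max ((θ t).2 b + η * mvec1 A μ r₁ (strat (θ t)) b) 0))
    (hnz : ∀ t, (θ t).1 ≠ 0 ∧ (θ t).2 ≠ 0)
    (C₂ : ℝ) (hC₂ : C₂ = Phi A μ r₀ r₁ η xs ys (θ 0)) :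
    (∀ T : ℕ,
      C₁ * ∑ t ∈ Finset.range T,
        (1 / 2) * (sqnorm (xs - (strat (θ t)).1) + sqnorm (ys - (strat (θ t)).2)) ≤ C₂) ∧
    Summable (fun t =>
      sqnorm (xs - (strat (θ t)).1) + sqnorm (ys - (strat (θ t)).2)) := by
  have hxs := hsaddle.1
  have hys := hsaddle.2.1
  -- nonnegativity of θ along the dynamics
  have hnonneg : ∀ t, (∀ a, 0 ≤ (θ t).1 a) ∧ (∀ b, 0 ≤ (θ t).2 b) := by
    intro t
    induction t with
    | zero => exact hinit_nonneg
    | succ t ih =>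
      rw [hrec t]
      exact ⟨fun a => le_max_right _ _, fun b => le_max_right _ _⟩
  have hstrat1 : ∀ t, (strat (θ t)).1 ∈ stdSimplex ℝ (Fin m) := fun t =>
    normalize_mem (θ t).1 (hnonneg t).1 (hnz t).1
  have hstrat2 : ∀ t, (strat (θ t)).2 ∈ stdSimplex ℝ (Fin n) := fun t =>
    normalize_mem (θ t).2 (hnonneg t).2 (hnz t).2
  -- abbreviation for the per-round distance
  set D : ℕ → ℝ := fun t =>
    (1 / 2) * (sqnorm (xs - (strat (θ t)).1) + sqnorm (ys - (strat (θ t)).2)) with hD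
  have hDnn : ∀ t, 0 ≤ D t := by
    intro t
    have h1 := sqnorm_nonneg (xs - (strat (θ t)).1)
    have h2 := sqnorm_nonneg (ys - (strat (θ t)).2)
    simp only [hD]; linarith
  -- nonpositivity of m(σ*)
  have hms0 : ∀ a, mvec0 A μ r₀ (xs, ys) a ≤ 0 := mvec0_saddle_nonpos hμ hsaddle
  have hms1 : ∀ b, mvec1 A μ r₁ (xs, ys) b ≤ 0 := mvec1_saddle_nonpos hμ hsaddle
  -- facts about the inf-set of Phi
  have hSne : ∀ u : (Fin m → ℝ) × (Fin n → ℝ), Set.Nonempty {v : ℝ | ∃ k : ℝ, 1 ≤ k ∧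
      v = (1 / 2) * (sqnorm (k • xs - u.1) + sqnorm (k • ys - u.2))} := by
    intro u
    exact ⟨(1 / 2) * (sqnorm ((1:ℝ) • xs - u.1) + sqnorm ((1:ℝ) • ys - u.2)), 1, le_refl 1, rfl⟩
  have hSbdd : ∀ u : (Fin m → ℝ) × (Fin n → ℝ), BddBelow {v : ℝ | ∃ k : ℝ, 1 ≤ k ∧
      v = (1 / 2) * (sqnorm (k • xs - u.1) + sqnorm (k • ys - u.2))} := by
    intro u
    refine ⟨0, fun v hv => ?_⟩
    obtain ⟨k, _, rfl⟩ := hv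
    have h1 := sqnorm_nonneg (k • xs - u.1)
    have h2 := sqnorm_nonneg (k • ys - u.2)
    linarith
  have hSnn : ∀ u : (Fin m → ℝ) × (Fin n → ℝ),
      0 ≤ sInf {v : ℝ | ∃ k : ℝ, 1 ≤ k ∧
        v = (1 / 2) * (sqnorm (k • xs - u.1) + sqnorm (k • ys - u.2))} := by
    intro u
    apply Real.sInf_nonneg
    rintro v ⟨k, _, rfl⟩
    have h1 := sqnorm_nonneg (k • xs - u.1)
    have h2 := sqnorm_nonneg (k • ys - u.2)
    linarith
  -- the one-step decrease of the potential
  have step : ∀ t, Phi A μ r₀ r₁ η xs ys (θ (t + 1)) + C₁ * D t ≤ Phi A μ r₀ r₁ η xs ys (θ t) := by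
    intro t
    unfold Phi
    have hmain : ∀ k : ℝ, 1 ≤ k →
        sInf {v : ℝ | ∃ k' : ℝ, 1 ≤ k' ∧
            v = (1 / 2) * (sqnorm (k' • xs - (θ (t+1)).1) + sqnorm (k' • ys - (θ (t+1)).2))}
          + η * (ip (-(mvec0 A μ r₀ (xs, ys))) (θ (t+1)).1
              + ip (-(mvec1 A μ r₁ (xs, ys))) (θ (t+1)).2) + C₁ * D t
        ≤ (1 / 2) * (sqnorm (k • xs - (θ t).1) + sqnorm (k • ys - (θ t).2))
          + η * (ip (-(mvec0 A μ r₀ (xs, ys))) (θ t).1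
              + ip (-(mvec1 A μ r₁ (xs, ys))) (θ t).2) := by
      intro k hk
      have hinf_le :
          sInf {v : ℝ | ∃ k' : ℝ, 1 ≤ k' ∧
              v = (1 / 2) * (sqnorm (k' • xs - (θ (t+1)).1) + sqnorm (k' • ys - (θ (t+1)).2))}
            ≤ (1 / 2) * (sqnorm (k • xs - (θ (t+1)).1) + sqnorm (k • ys - (θ (t+1)).2)) :=
        csInf_le (hSbdd (θ (t+1))) ⟨k, hk, rfl⟩
      -- per-coordinate step inequality, block 0
      have hθ'1 : (θ (t+1)).1 = fun a => max ((θ t).1 a + η * mvec0 A μ r₀ (strat (θ t)) a) 0 := by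
        rw [hrec t]
      have hθ'2 : (θ (t+1)).2 = fun b => max ((θ t).2 b + η * mvec1 A μ r₁ (strat (θ t)) b) 0 := by
        rw [hrec t]
      have hsum0 :
          (1/2) * sqnorm (k • xs - (θ (t+1)).1) + η * ip (-(mvec0 A μ r₀ (xs, ys))) (θ (t+1)).1
            - ((1/2) * sqnorm (k • xs - (θ t).1) + η * ip (-(mvec0 A μ r₀ (xs, ys))) (θ t).1)
          ≤ η * ip (mvec0 A μ r₀ (strat (θ t))) (θ t).1
            - k * (η * ip (mvec0 A μ r₀ (strat (θ t))) xs)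
            + (η^2/2) * sqnorm (fun a => mvec0 A μ r₀ (strat (θ t)) a - mvec0 A μ r₀ (xs, ys) a) := by
        have coord : ∀ a : Fin m,
            (1/2)*(k * xs a - max ((θ t).1 a + η * mvec0 A μ r₀ (strat (θ t)) a) 0)^2
              + (η * (-(mvec0 A μ r₀ (xs, ys) a)))
                  * max ((θ t).1 a + η * mvec0 A μ r₀ (strat (θ t)) a) 0
              - ((1/2)*(k * xs a - (θ t).1 a)^2
                  + (η * (-(mvec0 A μ r₀ (xs, ys) a))) * (θ t).1 a)
            ≤ (η * mvec0 A μ r₀ (strat (θ t)) a) * ((θ t).1 a - k * xs a)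
              + (1/2)*((η * mvec0 A μ r₀ (strat (θ t)) a) + (η * (-(mvec0 A μ r₀ (xs, ys) a))))^2 := by
          intro a
          exact coord_ineq (k * xs a) ((θ t).1 a) (η * mvec0 A μ r₀ (strat (θ t)) a)
            (η * (-(mvec0 A μ r₀ (xs, ys) a)))
            (mul_nonneg (by linarith) (hxs.1 a)) ((hnonneg t).1 a)
            (mul_nonneg hη.le (by linarith [hms0 a]))
        have hsum := Finset.sum_le_sum (fun a (_ : a ∈ Finset.univ) => coord a)
        have eL : ∑ a : Fin m,
            ((1/2)*(k * xs a - max ((θ t).1 a + η * mvec0 A μ r₀ (strat (θ t)) a) 0)^2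
              + (η * (-(mvec0 A μ r₀ (xs, ys) a)))
                  * max ((θ t).1 a + η * mvec0 A μ r₀ (strat (θ t)) a) 0
              - ((1/2)*(k * xs a - (θ t).1 a)^2
                  + (η * (-(mvec0 A μ r₀ (xs, ys) a))) * (θ t).1 a))
            = (1/2) * sqnorm (k • xs - (θ (t+1)).1)
              + η * ip (-(mvec0 A μ r₀ (xs, ys))) (θ (t+1)).1
              - ((1/2) * sqnorm (k • xs - (θ t).1)
                  + η * ip (-(mvec0 A μ r₀ (xs, ys))) (θ t).1) := by
          rw [hθ'1]
          unfold sqnorm ip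
          simp only [Pi.sub_apply, Pi.smul_apply, Pi.neg_apply, smul_eq_mul, Finset.mul_sum,
            ← Finset.sum_add_distrib, ← Finset.sum_sub_distrib]
          exact Finset.sum_congr rfl fun a _ => by ring
        have eR : ∑ a : Fin m,
            ((η * mvec0 A μ r₀ (strat (θ t)) a) * ((θ t).1 a - k * xs a)
              + (1/2)*((η * mvec0 A μ r₀ (strat (θ t)) a) + (η * (-(mvec0 A μ r₀ (xs, ys) a))))^2)
            = η * ip (mvec0 A μ r₀ (strat (θ t))) (θ t).1
              - k * (η * ip (mvec0 A μ r₀ (strat (θ t))) xs)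
              + (η^2/2) * sqnorm (fun a => mvec0 A μ r₀ (strat (θ t)) a - mvec0 A μ r₀ (xs, ys) a) := by
          unfold sqnorm ip
          simp only [Finset.mul_sum, ← Finset.sum_add_distrib, ← Finset.sum_sub_distrib]
          exact Finset.sum_congr rfl fun a _ => by ring
        rw [eL, eR] at hsum
        exact hsum
      have hsum1 :
          (1/2) * sqnorm (k • ys - (θ (t+1)).2) + η * ip (-(mvec1 A μ r₁ (xs, ys))) (θ (t+1)).2
            - ((1/2) * sqnorm (k • ys - (θ t).2) + η * ip (-(mvec1 A μ r₁ (xs, ys))) (θ t).2)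
          ≤ η * ip (mvec1 A μ r₁ (strat (θ t))) (θ t).2
            - k * (η * ip (mvec1 A μ r₁ (strat (θ t))) ys)
            + (η^2/2) * sqnorm (fun b => mvec1 A μ r₁ (strat (θ t)) b - mvec1 A μ r₁ (xs, ys) b) := by
        have coord : ∀ b : Fin n,
            (1/2)*(k * ys b - max ((θ t).2 b + η * mvec1 A μ r₁ (strat (θ t)) b) 0)^2
              + (η * (-(mvec1 A μ r₁ (xs, ys) b)))
                  * max ((θ t).2 b + η * mvec1 A μ r₁ (strat (θ t)) b) 0
              - ((1/2)*(k * ys b - (θ t).2 b)^2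
                  + (η * (-(mvec1 A μ r₁ (xs, ys) b))) * (θ t).2 b)
            ≤ (η * mvec1 A μ r₁ (strat (θ t)) b) * ((θ t).2 b - k * ys b)
              + (1/2)*((η * mvec1 A μ r₁ (strat (θ t)) b) + (η * (-(mvec1 A μ r₁ (xs, ys) b))))^2 := by
          intro b
          exact coord_ineq (k * ys b) ((θ t).2 b) (η * mvec1 A μ r₁ (strat (θ t)) b)
            (η * (-(mvec1 A μ r₁ (xs, ys) b)))
            (mul_nonneg (by linarith) (hys.1 b)) ((hnonneg t).2 b)
            (mul_nonneg hη.le (by linarith [hms1 b]))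
        have hsum := Finset.sum_le_sum (fun b (_ : b ∈ Finset.univ) => coord b)
        have eL : ∑ b : Fin n,
            ((1/2)*(k * ys b - max ((θ t).2 b + η * mvec1 A μ r₁ (strat (θ t)) b) 0)^2
              + (η * (-(mvec1 A μ r₁ (xs, ys) b)))
                  * max ((θ t).2 b + η * mvec1 A μ r₁ (strat (θ t)) b) 0
              - ((1/2)*(k * ys b - (θ t).2 b)^2
                  + (η * (-(mvec1 A μ r₁ (xs, ys) b))) * (θ t).2 b))
            = (1/2) * sqnorm (k • ys - (θ (t+1)).2)
              + η * ip (-(mvec1 A μ r₁ (xs, ys))) (θ (t+1)).2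
              - ((1/2) * sqnorm (k • ys - (θ t).2)
                  + η * ip (-(mvec1 A μ r₁ (xs, ys))) (θ t).2) := by
          rw [hθ'2]
          unfold sqnorm ip
          simp only [Pi.sub_apply, Pi.smul_apply, Pi.neg_apply, smul_eq_mul, Finset.mul_sum,
            ← Finset.sum_add_distrib, ← Finset.sum_sub_distrib]
          exact Finset.sum_congr rfl fun b _ => by ring
        have eR : ∑ b : Fin n,
            ((η * mvec1 A μ r₁ (strat (θ t)) b) * ((θ t).2 b - k * ys b)
              + (1/2)*((η * mvec1 A μ r₁ (strat (θ t)) b) + (η * (-(mvec1 A μ r₁ (xs, ys) b))))^2)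
            = η * ip (mvec1 A μ r₁ (strat (θ t))) (θ t).2
              - k * (η * ip (mvec1 A μ r₁ (strat (θ t))) ys)
              + (η^2/2) * sqnorm (fun b => mvec1 A μ r₁ (strat (θ t)) b - mvec1 A μ r₁ (xs, ys) b) := by
          unfold sqnorm ip
          simp only [Finset.mul_sum, ← Finset.sum_add_distrib, ← Finset.sum_sub_distrib]
          exact Finset.sum_congr rfl fun b _ => by ring
        rw [eL, eR] at hsum
        exact hsum
      -- orthogonality
      have hOrth0 : ip (mvec0 A μ r₀ (strat (θ t))) (θ t).1 = 0 :=
        ip_mvec_zero (ell0 A μ r₀ (strat (θ t))) (θ t).1 (hnonneg t).1 (hnz t).1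
      have hOrth1 : ip (mvec1 A μ r₁ (strat (θ t))) (θ t).2 = 0 :=
        ip_mvec_zero (ell1 A μ r₁ (strat (θ t))) (θ t).2 (hnonneg t).2 (hnz t).2
      -- monotonicity bound
      set Dq : ℝ := sqnorm (fun i => (strat (θ t)).1 i - xs i)
        + sqnorm (fun j => (strat (θ t)).2 j - ys j) with hDq
      have hDqD : D t = (1/2) * Dq := by
        have e1 : sqnorm (xs - (strat (θ t)).1) = sqnorm (fun i => (strat (θ t)).1 i - xs i) := by
          rw [show sqnorm (xs - (strat (θ t)).1) = sqnorm (fun i => xs i - (strat (θ t)).1 i) from rfl,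
            sqnorm_sub_comm]
        have e2 : sqnorm (ys - (strat (θ t)).2) = sqnorm (fun j => (strat (θ t)).2 j - ys j) := by
          rw [show sqnorm (ys - (strat (θ t)).2) = sqnorm (fun j => ys j - (strat (θ t)).2 j) from rfl,
            sqnorm_sub_comm]
        simp only [hD, hDq, e1, e2]
      have hDqnn : 0 ≤ Dq := by
        have h1 := sqnorm_nonneg (fun i => (strat (θ t)).1 i - xs i)
        have h2 := sqnorm_nonneg (fun j => (strat (θ t)).2 j - ys j)
        linarith
      have hMono : μ * Dq ≤ ip (mvec0 A μ r₀ (strat (θ t))) xs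
          + ip (mvec1 A μ r₁ (strat (θ t))) ys := by
        have h := mono_vi hμ hsaddle (hstrat1 t) (hstrat2 t)
        simpa using h
      -- Lipschitz bound
      have hLip : sqnorm (fun a => mvec0 A μ r₀ (strat (θ t)) a - mvec0 A μ r₀ (xs, ys) a)
          + sqnorm (fun b => mvec1 A μ r₁ (strat (θ t)) b - mvec1 A μ r₁ (xs, ys) b)
          ≤ C₀^2 * Dq := by
        have h := mvec_lipschitz hm hn hA hμ hP hr₀ hr₁ (hstrat1 t) (hstrat2 t) hxs hys
        rw [← hC₀] at h
        simpa using h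
      -- combine
      set M : ℝ := ip (mvec0 A μ r₀ (strat (θ t))) xs + ip (mvec1 A μ r₁ (strat (θ t))) ys with hM
      have hMnn : 0 ≤ M := le_trans (mul_nonneg hμ.le hDqnn) hMono
      have hkM : η * M ≤ k * (η * M) :=
        le_mul_of_one_le_left (mul_nonneg hη.le hMnn) hk
      have hmuM : η * (μ * Dq) ≤ η * M := mul_le_mul_of_nonneg_left hMono hη.le
      have hLipEta : (η^2/2) * (sqnorm (fun a => mvec0 A μ r₀ (strat (θ t)) a - mvec0 A μ r₀ (xs, ys) a)
          + sqnorm (fun b => mvec1 A μ r₁ (strat (θ t)) b - mvec1 A μ r₁ (xs, ys) b))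
          ≤ (η^2/2) * (C₀^2 * Dq) := by
        apply mul_le_mul_of_nonneg_left hLip
        positivity
      have hC₁D : C₁ * D t = η * (μ * Dq) - (η^2/2) * (C₀^2 * Dq) + (C₁ * D t + (η^2/2) * (C₀^2 * Dq) - η * (μ * Dq)) := by ring
      -- final accounting
      have final : C₁ * D t ≤ η * (μ * Dq) - (η^2/2) * (C₀^2 * Dq) := by
        rw [hDqD, hC₁]
        ring_nf
        nlinarith [hDqnn]
      have hsplit : k * (η * ip (mvec0 A μ r₀ (strat (θ t))) xs)
          + k * (η * ip (mvec1 A μ r₁ (strat (θ t))) ys) = k * (η * M) := by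
        rw [hM]; ring
      have hsplit2 : (η^2/2) * sqnorm (fun a => mvec0 A μ r₀ (strat (θ t)) a - mvec0 A μ r₀ (xs, ys) a)
          + (η^2/2) * sqnorm (fun b => mvec1 A μ r₁ (strat (θ t)) b - mvec1 A μ r₁ (xs, ys) b)
          = (η^2/2) * (sqnorm (fun a => mvec0 A μ r₀ (strat (θ t)) a - mvec0 A μ r₀ (xs, ys) a)
            + sqnorm (fun b => mvec1 A μ r₁ (strat (θ t)) b - mvec1 A μ r₁ (xs, ys) b)) := by ring
      have hsplit3 : η * (ip (-(mvec0 A μ r₀ (xs, ys))) (θ (t+1)).1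
            + ip (-(mvec1 A μ r₁ (xs, ys))) (θ (t+1)).2)
          = η * ip (-(mvec0 A μ r₀ (xs, ys))) (θ (t+1)).1
            + η * ip (-(mvec1 A μ r₁ (xs, ys))) (θ (t+1)).2 := by ring
      have hsplit4 : η * (ip (-(mvec0 A μ r₀ (xs, ys))) (θ t).1
            + ip (-(mvec1 A μ r₁ (xs, ys))) (θ t).2)
          = η * ip (-(mvec0 A μ r₀ (xs, ys))) (θ t).1
            + η * ip (-(mvec1 A μ r₁ (xs, ys))) (θ t).2 := by ring
      have hO0 : η * ip (mvec0 A μ r₀ (strat (θ t))) (θ t).1 = 0 := by rw [hOrth0]; ring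
      have hO1 : η * ip (mvec1 A μ r₁ (strat (θ t))) (θ t).2 = 0 := by rw [hOrth1]; ring
      have chk0 : 1/2 * sqnorm (k • xs - (θ (t+1)).1)
            + η * ip (-(mvec0 A μ r₀ (xs, ys))) (θ (t+1)).1
            - (1/2 * sqnorm (k • xs - (θ t).1) + η * ip (-(mvec0 A μ r₀ (xs, ys))) (θ t).1)
          ≤ - (k * (η * ip (mvec0 A μ r₀ (strat (θ t))) xs))
            + (η^2/2) * sqnorm (fun a => mvec0 A μ r₀ (strat (θ t)) a - mvec0 A μ r₀ (xs, ys) a) := by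
        linarith only [hsum0, hO0]
      have chk1 : 1/2 * sqnorm (k • ys - (θ (t+1)).2)
            + η * ip (-(mvec1 A μ r₁ (xs, ys))) (θ (t+1)).2
            - (1/2 * sqnorm (k • ys - (θ t).2) + η * ip (-(mvec1 A μ r₁ (xs, ys))) (θ t).2)
          ≤ - (k * (η * ip (mvec1 A μ r₁ (strat (θ t))) ys))
            + (η^2/2) * sqnorm (fun b => mvec1 A μ r₁ (strat (θ t)) b - mvec1 A μ r₁ (xs, ys) b) := by
        linarith only [hsum1, hO1]
      have chk2 : - (k * (η * ip (mvec0 A μ r₀ (strat (θ t))) xs))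
            - (k * (η * ip (mvec1 A μ r₁ (strat (θ t))) ys)) ≤ - (η * (μ * Dq)) := by
        linarith only [hsplit, hkM, hmuM]
      have chk3 : (η^2/2) * sqnorm (fun a => mvec0 A μ r₀ (strat (θ t)) a - mvec0 A μ r₀ (xs, ys) a)
            + (η^2/2) * sqnorm (fun b => mvec1 A μ r₁ (strat (θ t)) b - mvec1 A μ r₁ (xs, ys) b)
          ≤ (η^2/2) * (C₀^2 * Dq) := by
        linarith only [hsplit2, hLipEta]
      have comb : sInf {v : ℝ | ∃ k' : ℝ, 1 ≤ k' ∧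
            v = (1 / 2) * (sqnorm (k' • xs - (θ (t+1)).1) + sqnorm (k' • ys - (θ (t+1)).2))}
          + η * (ip (-(mvec0 A μ r₀ (xs, ys))) (θ (t+1)).1
              + ip (-(mvec1 A μ r₁ (xs, ys))) (θ (t+1)).2)
          ≤ (1 / 2) * (sqnorm (k • xs - (θ t).1) + sqnorm (k • ys - (θ t).2))
            + η * (ip (-(mvec0 A μ r₀ (xs, ys))) (θ t).1
              + ip (-(mvec1 A μ r₁ (xs, ys))) (θ t).2)
            - η * (μ * Dq) + (η^2/2) * (C₀^2 * Dq) := by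
        have combB : sInf {v : ℝ | ∃ k' : ℝ, 1 ≤ k' ∧
              v = (1 / 2) * (sqnorm (k' • xs - (θ (t+1)).1) + sqnorm (k' • ys - (θ (t+1)).2))}
            ≤ 1/2 * sqnorm (k • xs - (θ (t+1)).1) + 1/2 * sqnorm (k • ys - (θ (t+1)).2) := by
          linarith only [hinf_le]
        have combC : - (η * (μ * Dq)) + (η^2/2) * (C₀^2 * Dq)
            ≥ (- (k * (η * ip (mvec0 A μ r₀ (strat (θ t))) xs))
               - (k * (η * ip (mvec1 A μ r₁ (strat (θ t))) ys)))
              + ((η^2/2) * sqnorm (fun a => mvec0 A μ r₀ (strat (θ t)) a - mvec0 A μ r₀ (xs, ys) a)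
               + (η^2/2) * sqnorm (fun b => mvec1 A μ r₁ (strat (θ t)) b - mvec1 A μ r₁ (xs, ys) b)) := by
          have hadd := add_le_add chk2 chk3
          linarith only [hadd]
        linarith only [combB, combC, chk0, chk1]
      linarith only [comb, final]
    -- pass to the infimum over the reference set at time t
    have hfin : sInf {v : ℝ | ∃ k' : ℝ, 1 ≤ k' ∧
            v = (1 / 2) * (sqnorm (k' • xs - (θ (t+1)).1) + sqnorm (k' • ys - (θ (t+1)).2))}
          + η * (ip (-(mvec0 A μ r₀ (xs, ys))) (θ (t+1)).1
              + ip (-(mvec1 A μ r₁ (xs, ys))) (θ (t+1)).2) + C₁ * D t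
          - η * (ip (-(mvec0 A μ r₀ (xs, ys))) (θ t).1
              + ip (-(mvec1 A μ r₁ (xs, ys))) (θ t).2)
        ≤ sInf {v : ℝ | ∃ k : ℝ, 1 ≤ k ∧
            v = (1 / 2) * (sqnorm (k • xs - (θ t).1) + sqnorm (k • ys - (θ t).2))} := by
      apply le_csInf (hSne (θ t))
      rintro b ⟨k, hk, rfl⟩
      have h := hmain k hk
      linarith
    linarith [hfin]
  -- nonnegativity of the potential
  have hPhinn : ∀ t, 0 ≤ Phi A μ r₀ r₁ η xs ys (θ t) := by
    intro t
    unfold Phi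
    have h1 := hSnn (θ t)
    have h2 : 0 ≤ ip (-(mvec0 A μ r₀ (xs, ys))) (θ t).1 := by
      apply Finset.sum_nonneg
      intro a _
      have := hms0 a
      have := (hnonneg t).1 a
      have e : (-(mvec0 A μ r₀ (xs, ys))) a = -(mvec0 A μ r₀ (xs, ys) a) := rfl
      rw [e]
      nlinarith
    have h3 : 0 ≤ ip (-(mvec1 A μ r₁ (xs, ys))) (θ t).2 := by
      apply Finset.sum_nonneg
      intro b _
      have := hms1 b
      have := (hnonneg t).2 b
      have e : (-(mvec1 A μ r₁ (xs, ys))) b = -(mvec1 A μ r₁ (xs, ys) b) := rfl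
      rw [e]
      nlinarith
    have h4 : 0 ≤ η * (ip (-(mvec0 A μ r₀ (xs, ys))) (θ t).1
        + ip (-(mvec1 A μ r₁ (xs, ys))) (θ t).2) := by
      apply mul_nonneg hη.le
      linarith
    linarith
  -- telescoping
  have tele : ∀ T : ℕ, Phi A μ r₀ r₁ η xs ys (θ T) + C₁ * ∑ t ∈ Finset.range T, D t ≤ C₂ := by
    intro T
    induction T with
    | zero => simp [hC₂]
    | succ T ih =>
      rw [Finset.sum_range_succ, mul_add]
      have := step T
      linarith
  have part1 : ∀ T : ℕ, C₁ * ∑ t ∈ Finset.range T, D t ≤ C₂ := by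
    intro T
    have := tele T
    linarith [hPhinn T]
  constructor
  · exact part1
  · apply summable_of_sum_range_le (c := 2 * (C₂ / C₁))
    · intro t
      have h1 := sqnorm_nonneg (xs - (strat (θ t)).1)
      have h2 := sqnorm_nonneg (ys - (strat (θ t)).2)
      linarith
    · intro T
      have hsum : ∑ t ∈ Finset.range T,
          (sqnorm (xs - (strat (θ t)).1) + sqnorm (ys - (strat (θ t)).2))
          = 2 * ∑ t ∈ Finset.range T, D t := by
        rw [Finset.mul_sum]
        refine Finset.sum_congr rfl fun t _ => ?_
        simp only [hD]
        ring
      rw [hsum]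
      have h := part1 T
      have hDsum : ∑ t ∈ Finset.range T, D t ≤ C₂ / C₁ := by
        rw [le_div_iff₀ hC₁pos]
        linarith [h]
      linarith
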